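/- Let X be a probability space, n a positive integer, and f ∈ L²(X^n) with generalized Walsh expansion f = Σ_{S ⊆ [n]} F_S. Then ‖f‖_2² = Σ_{S ⊆ [n]} ‖F_S‖_2² (Parseval's identity). -/

import Mathlib

open MeasureTheory

section Aux

variable {Ω : Type*} [MeasurableSpace Ω]

private lemma mp_update (μ : Measure Ω) [IsProbabilityMeasure μ] {n : ℕ} (i : Fin n) :
    MeasurePreserving (fun p : (Fin n → Ω) × Ω => Function.update p.1 i p.2)
      ((Measure.pi fun _ : Fin n => μ).prod μ) (Measure.pi fun _ : Fin n => μ) := by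
  refine ⟨measurable_update', ?_⟩
  refine (Measure.pi_eq fun s hs => ?_).symm
  rw [Measure.map_apply measurable_update' (MeasurableSet.univ_pi hs)]
  have hpre : (fun p : (Fin n → Ω) × Ω => Function.update p.1 i p.2) ⁻¹' Set.pi Set.univ s
      = (Set.pi Set.univ (Function.update s i Set.univ)) ×ˢ (s i) := by
    ext ⟨x, t⟩
    simp only [Set.mem_preimage, Set.mem_pi, Set.mem_univ, true_implies, Set.mem_prod]
    constructor
    · intro h
      refine ⟨fun j => ?_, by simpa using h i⟩
      rcases eq_or_ne j i with rfl | hj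
      · simp
      · simpa [Function.update_of_ne hj] using h j
    · rintro ⟨h1, h2⟩ j
      rcases eq_or_ne j i with rfl | hj
      · simpa
      · simpa [Function.update_of_ne hj] using h1 j
  rw [hpre, Measure.prod_prod, Measure.pi_pi]
  have happ : ∀ j, μ (Function.update s i Set.univ j)
      = Function.update (fun j => μ (s j)) i (μ Set.univ) j :=
    fun j => (Function.apply_update (fun _ t => μ t) s i Set.univ j)
  simp_rw [happ]
  rw [Finset.prod_update_of_mem (Finset.mem_univ i),
    ← Finset.mul_prod_erase Finset.univ (fun j => μ (s j)) (Finset.mem_univ i)]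
  simp [measure_univ, mul_comm, Finset.erase_eq]

private lemma key_orth (μ : Measure Ω) [IsProbabilityMeasure μ] {n : ℕ}
    (g h : (Fin n → Ω) → ℂ) (i : Fin n)
    (hint : Integrable (fun x => g x * h x) (Measure.pi fun _ : Fin n => μ))
    (hg0 : ∀ᵐ x ∂(Measure.pi fun _ : Fin n => μ), ∫ t, g (Function.update x i t) ∂μ = 0)
    (hh : ∀ x t, h (Function.update x i t) = h x) :
    ∫ x, g x * h x ∂(Measure.pi fun _ : Fin n => μ) = 0 := by
  have hmp := mp_update μ i
  have hintp : Integrable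
      (fun p : (Fin n → Ω) × Ω => g (Function.update p.1 i p.2) * h (Function.update p.1 i p.2))
      (((Measure.pi fun _ : Fin n => μ)).prod μ) := by
    have := (hmp.integrable_comp hint.1).mpr hint
    exact this
  have h1 : ∫ x, g x * h x ∂(Measure.pi fun _ : Fin n => μ)
      = ∫ p : (Fin n → Ω) × Ω,
          g (Function.update p.1 i p.2) * h (Function.update p.1 i p.2)
          ∂(((Measure.pi fun _ : Fin n => μ)).prod μ) := by
    conv_lhs => rw [← hmp.map_eq]
    exact integral_map hmp.measurable.aemeasurable (by rw [hmp.map_eq]; exact hint.1)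
  rw [h1, integral_prod _ hintp]
  have hz : ∀ᵐ x ∂(Measure.pi fun _ : Fin n => μ),
      ∫ t, g (Function.update x i t) * h (Function.update x i t) ∂μ = 0 := by
    filter_upwards [hg0] with x hx
    simp only [hh]
    rw [integral_mul_const, hx, zero_mul]
  rw [integral_congr_ae hz, integral_zero]

end Aux

/-- **Parseval's identity** for the generalized Walsh expansion:
`‖f‖₂² = Σ_{S ⊆ [n]} ‖F_S‖₂²`. -/
theorem walsh_parseval {Ω : Type*} [MeasurableSpace Ω] (μ : Measure Ω)
    [IsProbabilityMeasure μ] (n : ℕ) (hn : 0 < n) (f : (Fin n → Ω) → ℂ)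
    (hf : MemLp f 2 (Measure.pi fun _ : Fin n => μ))
    (F : Finset (Fin n) → ((Fin n → Ω) → ℂ))
    (hF2 : ∀ S, MemLp (F S) 2 (Measure.pi fun _ : Fin n => μ))
    (hFdep : ∀ S : Finset (Fin n), ∀ x y : Fin n → Ω, (∀ i ∈ S, x i = y i) → F S x = F S y)
    (hFzero : ∀ S : Finset (Fin n), ∀ i ∈ S, ∀ᵐ x ∂(Measure.pi fun _ : Fin n => μ),
      ∫ t, F S (Function.update x i t) ∂μ = 0)
    (hsum : ∀ᵐ x ∂(Measure.pi fun _ : Fin n => μ), f x = ∑ S : Finset (Fin n), F S x) :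
    ∫ x, ‖f x‖ ^ 2 ∂(Measure.pi fun _ : Fin n => μ) =
      ∑ S : Finset (Fin n), ∫ x, ‖F S x‖ ^ 2 ∂(Measure.pi fun _ : Fin n => μ) := by
  set π := Measure.pi fun _ : Fin n => μ with hπ
  -- conjugates are in L²
  have hF2c : ∀ S, MemLp (fun x => (starRingEnd ℂ) (F S x)) 2 π := by
    intro S
    refine MemLp.of_le (hF2 S) (RCLike.continuous_conj.comp_aestronglyMeasurable (hF2 S).1) ?_
    filter_upwards with x
    simp [RCLike.norm_conj]
  -- products are integrable
  have hprod : ∀ S T, Integrable (fun x => (starRingEnd ℂ) (F S x) * F T x) π := by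
    intro S T
    have := MemLp.smul (p := 2) (q := 2) (r := 1) (hF2 T) (hF2c S)
    rw [memLp_one_iff_integrable] at this
    exact this
  -- orthogonality
  have horth : ∀ S T : Finset (Fin n), S ≠ T →
      ∫ x, (starRingEnd ℂ) (F S x) * F T x ∂π = 0 := by
    intro S T hST
    have hns : ¬(S ⊆ T ∧ T ⊆ S) := fun ⟨h1, h2⟩ => hST (Finset.Subset.antisymm h1 h2)
    have invfree : ∀ (U : Finset (Fin n)) (i : Fin n), i ∉ U →
        ∀ x t, F U (Function.update x i t) = F U x := by
      intro U i hiU x t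
      apply hFdep
      intro j hj
      exact Function.update_of_ne (by rintro rfl; exact hiU hj) _ _
    rcases not_and_or.mp hns with hcase | hcase
    · obtain ⟨i, hiS, hiT⟩ := Finset.not_subset.mp hcase
      apply key_orth μ _ _ i (hprod S T)
      · filter_upwards [hFzero S i hiS] with x hx
        rw [integral_conj, hx, map_zero]
      · exact invfree T i hiT
    · obtain ⟨i, hiT, hiS⟩ := Finset.not_subset.mp hcase
      have h0 : ∫ x, F T x * (starRingEnd ℂ) (F S x) ∂π = 0 := by
        apply key_orth μ _ _ i (by simpa [mul_comm] using hprod S T)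
        · exact hFzero T i hiT
        · intro x t; rw [invfree S i hiS]
      rw [← h0]
      congr 1
      ext x
      ring
  -- pointwise identity for the norm of a sum
  have hnormsum : ∀ᵐ x ∂π, ‖f x‖ ^ 2
      = (∑ S : Finset (Fin n), ∑ T : Finset (Fin n),
          (starRingEnd ℂ) (F S x) * F T x).re := by
    filter_upwards [hsum] with x hx
    have : (∑ S : Finset (Fin n), ∑ T : Finset (Fin n),
        (starRingEnd ℂ) (F S x) * F T x)
        = (starRingEnd ℂ) (f x) * f x := by
      rw [hx, ← Finset.sum_mul_sum]
      rw [map_sum]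
    rw [this, Complex.conj_mul', ← Complex.ofReal_pow, Complex.ofReal_re]
  rw [integral_congr_ae hnormsum]
  have hre : ∀ g : (Fin n → Ω) → ℂ, Integrable g π → Integrable (fun x => (g x).re) π :=
    fun g hg => by simpa [RCLike.re_to_complex] using hg.re
  have hIre : ∀ g : (Fin n → Ω) → ℂ, Integrable g π →
      ∫ x, (g x).re ∂π = (∫ x, g x ∂π).re :=
    fun g hg => by simpa [RCLike.re_to_complex] using integral_re hg
  have hswap : ∫ x, (∑ S : Finset (Fin n), ∑ T : Finset (Fin n),
      (starRingEnd ℂ) (F S x) * F T x).re ∂π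
      = ∑ S : Finset (Fin n), ∑ T : Finset (Fin n),
        (∫ x, (starRingEnd ℂ) (F S x) * F T x ∂π).re := by
    simp_rw [Complex.re_sum]
    rw [integral_finset_sum _ fun S _ => integrable_finset_sum _ fun T _ => hre _ (hprod S T)]
    refine Finset.sum_congr rfl fun S _ => ?_
    rw [integral_finset_sum _ fun T _ => hre _ (hprod S T)]
    exact Finset.sum_congr rfl fun T _ => hIre _ (hprod S T)
  rw [hswap]
  refine Finset.sum_congr rfl fun S _ => ?_
  rw [Finset.sum_eq_single S (fun T _ hT => by rw [horth S T (Ne.symm hT)]; simp)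
    (fun hS => absurd (Finset.mem_univ S) hS)]
  rw [← hIre _ (hprod S S)]
  refine integral_congr_ae ?_
  filter_upwards with x
  rw [Complex.conj_mul', ← Complex.ofReal_pow, Complex.ofReal_re]
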